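/- arXiv:1204.5049 — 2 statements merged into one kernel-verified Lean document; each statement's English description precedes it below -/
import Mathlib

section
/- Let n be a positive integer and let A, B, C, D be n×n positive definite complex matrices. Let f : (0,∞) → (0,∞) be an operator monotone function (monotone on positive definite matrices of every finite size) with f(1) = 1 which is submultiplicative, i.e. f(xy) ≤ f(x)f(y) for all x, y > 0, and let σ be the associated matrix mean. Then (A σ C) ⊗ (B σ D) ≥ (A ⊗ B) σ (C ⊗ D), where ⊗ denotes the Kronecker product. -/
open scoped ComplexOrder

noncomputable section

/-- The real power `M ^ r` of a (positive definite) matrix, via the continuous functional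
calculus. -/
noncomputable def mPow {n : Type} [Fintype n] [DecidableEq n]
    (M : Matrix n n ℂ) (r : ℝ) : Matrix n n ℂ :=
  cfc (fun t : ℝ => t ^ r) M

/-- The matrix mean `A σ B = A^{1/2} f(A^{-1/2} B A^{-1/2}) A^{1/2}` associated with the
representing function `f`. -/
noncomputable def mMean {n : Type} [Fintype n] [DecidableEq n]
    (f : ℝ → ℝ) (A B : Matrix n n ℂ) : Matrix n n ℂ :=
  mPow A (1/2) * cfc f (mPow A (-(1/2)) * B * mPow A (-(1/2))) * mPow A (1/2)

/-- The weighted geometric mean `X #_α Y = X^{1/2} (X^{-1/2} Y X^{-1/2})^α X^{1/2}`. -/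
noncomputable def mGeoMean {n : Type} [Fintype n] [DecidableEq n]
    (α : ℝ) (A B : Matrix n n ℂ) : Matrix n n ℂ :=
  mMean (fun t : ℝ => t ^ α) A B

/-- `f : (0,∞) → (0,∞)` is operator monotone on positive definite complex matrices of every
finite size: `X ≤ Y` implies `f(X) ≤ f(Y)` (in the sense that the differences are positive
semidefinite). -/
def IsMatrixMonotone (f : ℝ → ℝ) : Prop :=
  ∀ (m : ℕ) (X Y : Matrix (Fin m) (Fin m) ℂ), X.PosDef → Y.PosDef →
    (Y - X).PosSemidef → (cfc f Y - cfc f X).PosSemidef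

open Matrix in
section
open Matrix

noncomputable section Aux

variable {N : Type} [Fintype N] [DecidableEq N]

/-- Conjugation by a unitary matrix as an `ℝ`-algebra homomorphism. -/
noncomputable def conjAlgHom (W : Matrix.unitaryGroup N ℂ) :
    Matrix N N ℂ →ₐ[ℝ] Matrix N N ℂ where
  toFun M := (W : Matrix N N ℂ) * M * star (W : Matrix N N ℂ)
  map_one' := by
    show (W : Matrix N N ℂ) * 1 * star (W : Matrix N N ℂ) = 1
    rw [mul_one]; exact W.2.2
  map_mul' M M' := by
    show (W : Matrix N N ℂ) * (M * M') * star (W : Matrix N N ℂ)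
      = ((W : Matrix N N ℂ) * M * star (W : Matrix N N ℂ))
        * ((W : Matrix N N ℂ) * M' * star (W : Matrix N N ℂ))
    have h : star (W : Matrix N N ℂ) * (W : Matrix N N ℂ) = 1 := W.2.1
    simp only [mul_assoc]
    rw [← mul_assoc (star (W : Matrix N N ℂ)), h, one_mul]
  map_zero' := by
    show (W : Matrix N N ℂ) * 0 * star (W : Matrix N N ℂ) = 0
    simp
  map_add' M M' := by
    show (W : Matrix N N ℂ) * (M + M') * star (W : Matrix N N ℂ) = _
    simp [Matrix.mul_add, Matrix.add_mul]
  commutes' r := by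
    show (W : Matrix N N ℂ) * algebraMap ℝ (Matrix N N ℂ) r * star (W : Matrix N N ℂ) = _
    simp only [Algebra.algebraMap_eq_smul_one, Matrix.mul_smul, Matrix.smul_mul, mul_one, one_mul]
    rw [W.2.2]

omit [Fintype N] in
lemma star_diagonal_ofReal (d : N → ℝ) :
    star (Matrix.diagonal (fun i => (d i : ℂ))) = Matrix.diagonal (fun i => (d i : ℂ)) := by
  rw [Matrix.star_eq_conjTranspose, Matrix.diagonal_conjTranspose]
  congr
  funext i
  simp [Pi.star_def, Complex.conj_ofReal]

/-- cfc of a unitary conjugation of a real diagonal matrix. -/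
lemma cfc_unitary_diag (W : Matrix.unitaryGroup N ℂ) (d : N → ℝ) (f : ℝ → ℝ) :
    cfc f ((W : Matrix N N ℂ) * Matrix.diagonal (fun i => (d i : ℂ)) * star (W : Matrix N N ℂ))
      = (W : Matrix N N ℂ) * Matrix.diagonal (fun i => (f (d i) : ℂ)) * star (W : Matrix N N ℂ) := by
  classical
  obtain ⟨p, hp⟩ : ∃ p : Polynomial ℝ, ∀ x ∈ Set.range d, p.eval x = f x := by
    rcases isEmpty_or_nonempty N with hN | hN
    · exact ⟨0, by simp [Set.range_eq_empty]⟩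
    refine ⟨Lagrange.interpolate (Finset.image d Finset.univ) id f, ?_⟩
    rintro x ⟨i, rfl⟩
    exact Lagrange.eval_interpolate_at_node f Function.injective_id.injOn
      (Finset.mem_image_of_mem d (Finset.mem_univ i))
  set Z := (W : Matrix N N ℂ) * Matrix.diagonal (fun i => (d i : ℂ)) * star (W : Matrix N N ℂ)
    with hZdef
  have hZsa : _root_.IsSelfAdjoint Z := by
    show star Z = Z
    simp only [hZdef, StarMul.star_mul, star_star, star_diagonal_ofReal, mul_assoc]
  have hspec : spectrum ℝ Z ⊆ Set.range d := by
    rw [hZdef, Unitary.spectrum_star_right_conjugate]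
    intro x hx
    rw [← spectrum.algebraMap_mem_iff ℂ, spectrum_diagonal] at hx
    obtain ⟨i, hi⟩ := hx
    rw [show (algebraMap ℝ ℂ) x = (x : ℂ) from rfl] at hi
    exact ⟨i, Complex.ofReal_inj.mp hi⟩
  have h1 : cfc f Z = cfc p.eval Z := cfc_congr (fun x hx => (hp x (hspec hx)).symm)
  rw [h1, cfc_polynomial p Z hZsa]
  have h2 : Z = conjAlgHom W (Matrix.diagonal (fun i => (d i : ℂ))) := rfl
  rw [h2, Polynomial.aeval_algHom_apply]
  have h3 : (Polynomial.aeval (Matrix.diagonal (fun i => (d i : ℂ)))) p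
      = Matrix.diagonal (fun i => (f (d i) : ℂ)) := by
    have h4 : Matrix.diagonal (fun i => (d i : ℂ))
        = Matrix.diagonalAlgHom (α := ℂ) (n := N) ℝ (fun i => (d i : ℂ)) := rfl
    rw [h4, Polynomial.aeval_algHom_apply]
    have h5 : (Polynomial.aeval (fun i => (d i : ℂ))) p
        = fun i => (f (d i) : ℂ) := by
      funext i
      have h7 := Polynomial.aeval_algHom_apply (Pi.evalAlgHom ℝ (fun _ : N => ℂ) i)
        (fun j => (d j : ℂ)) p
      simp only [Pi.evalAlgHom_apply] at h7
      rw [← h7]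
      have h6 : (d i : ℂ) = algebraMap ℝ ℂ (d i) := rfl
      rw [h6, Polynomial.aeval_algebraMap_apply,
        show ((Polynomial.aeval (d i)) p) = p.eval (d i) from
          congrFun (Polynomial.coe_aeval_eq_eval (d i)) p,
        hp (d i) ⟨i, rfl⟩]
      rfl
    rw [h5]
    rfl
  rw [h3]
  rfl

end Aux

noncomputable section Kron
open Kronecker

variable {N : Type} [Fintype N] [DecidableEq N]

lemma isHermitian_unitary_diag (W : Matrix.unitaryGroup N ℂ) (d : N → ℝ) :
    ((W : Matrix N N ℂ) * Matrix.diagonal (fun i => (d i : ℂ))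
      * star (W : Matrix N N ℂ)).IsHermitian := by
  show _ = _
  rw [← Matrix.star_eq_conjTranspose]
  simp only [StarMul.star_mul, star_star, star_diagonal_ofReal, mul_assoc]

set_option maxHeartbeats 1000000 in
lemma posDef_conj {A : Matrix N N ℂ} (hA : A.PosDef) {B : Matrix N N ℂ} (hB : IsUnit B) :
    (B * A * Bᴴ).PosDef := by
  refine Matrix.PosDef.of_dotProduct_mulVec_pos ?_ (fun x hx => ?_)
  · have h0 := Matrix.isHermitian_conjTranspose_mul_mul (A := A) Bᴴ hA.1
    rwa [Matrix.conjTranspose_conjTranspose] at h0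
  · have h1 : Bᴴ *ᵥ x ≠ 0 := by
      have hinj : Function.Injective (Bᴴ.mulVec) :=
        Matrix.mulVec_injective_iff_isUnit.mpr ((Matrix.isUnit_conjTranspose B).mpr hB)
      intro hc
      exact hx (hinj (by simpa using hc))
    simpa only [Matrix.star_mulVec, Matrix.dotProduct_mulVec, Matrix.vecMul_vecMul,
      Matrix.conjTranspose_conjTranspose] using hA.dotProduct_mulVec_pos h1

lemma posDef_unitary_diag (W : Matrix.unitaryGroup N ℂ) {d : N → ℝ} (hd : ∀ i, 0 < d i) :
    ((W : Matrix N N ℂ) * Matrix.diagonal (fun i => (d i : ℂ))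
      * star (W : Matrix N N ℂ)).PosDef := by
  have h1 : (Matrix.diagonal (fun i => (d i : ℂ))).PosDef :=
    Matrix.posDef_diagonal_iff.mpr fun i => by
      simpa using Complex.zero_lt_real.mpr (hd i)
  rw [Matrix.star_eq_conjTranspose]
  exact posDef_conj h1 ⟨Unitary.toUnits W, rfl⟩

/-- Spectral form of `cfc` for a Hermitian matrix. -/
lemma cfc_spectral {A : Matrix N N ℂ} (hA : A.IsHermitian) (f : ℝ → ℝ) :
    cfc f A = (hA.eigenvectorUnitary : Matrix N N ℂ)
      * Matrix.diagonal (fun i => (f (hA.eigenvalues i) : ℂ))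
      * star (hA.eigenvectorUnitary : Matrix N N ℂ) := by
  conv_lhs => rw [hA.spectral_theorem]
  exact cfc_unitary_diag _ _ f

variable {m l : Type} [Fintype m] [DecidableEq m] [Fintype l] [DecidableEq l]

lemma kron_conjTranspose (X : Matrix m m ℂ) (Y : Matrix l l ℂ) :
    (X ⊗ₖ Y)ᴴ = Xᴴ ⊗ₖ Yᴴ := by
  ext ⟨i, j⟩ ⟨k, r⟩
  simp [Matrix.conjTranspose_apply]

lemma kron_star (X : Matrix m m ℂ) (Y : Matrix l l ℂ) :
    star (X ⊗ₖ Y) = (star X) ⊗ₖ (star Y) := by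
  simp only [Matrix.star_eq_conjTranspose]
  exact kron_conjTranspose X Y

/-- Kronecker product of unitary matrices is unitary. -/
def kronUnitary (U : Matrix.unitaryGroup m ℂ) (V : Matrix.unitaryGroup l ℂ) :
    Matrix.unitaryGroup (m × l) ℂ :=
  ⟨(U : Matrix m m ℂ) ⊗ₖ (V : Matrix l l ℂ), by
    constructor
    · rw [kron_star, ← Matrix.mul_kronecker_mul, U.2.1, V.2.1, Matrix.one_kronecker_one]
    · rw [kron_star, ← Matrix.mul_kronecker_mul, U.2.2, V.2.2, Matrix.one_kronecker_one]⟩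

lemma diag_kron_diag (a : m → ℝ) (b : l → ℝ) :
    (Matrix.diagonal (fun i => (a i : ℂ))) ⊗ₖ (Matrix.diagonal (fun j => (b j : ℂ)))
      = Matrix.diagonal (fun p : m × l => ((a p.1 * b p.2 : ℝ) : ℂ)) := by
  rw [Matrix.diagonal_kronecker_diagonal]
  congr 1
  funext p
  push_cast
  ring

lemma conj_kron_conj (U : Matrix.unitaryGroup m ℂ) (V : Matrix.unitaryGroup l ℂ)
    (a : m → ℝ) (b : l → ℝ) :
    ((U : Matrix m m ℂ) * Matrix.diagonal (fun i => (a i : ℂ)) * star (U : Matrix m m ℂ))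
      ⊗ₖ ((V : Matrix l l ℂ) * Matrix.diagonal (fun j => (b j : ℂ)) * star (V : Matrix l l ℂ))
    = (kronUnitary U V : Matrix (m × l) (m × l) ℂ)
      * Matrix.diagonal (fun p : m × l => ((a p.1 * b p.2 : ℝ) : ℂ))
      * star (kronUnitary U V : Matrix (m × l) (m × l) ℂ) := by
  rw [Matrix.mul_kronecker_mul, Matrix.mul_kronecker_mul, diag_kron_diag, ← kron_star]
  rfl

lemma spectral_ofReal {A : Matrix N N ℂ} (hA : A.IsHermitian) :
    A = (hA.eigenvectorUnitary : Matrix N N ℂ)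
      * Matrix.diagonal (fun i => ((hA.eigenvalues i : ℝ) : ℂ))
      * star (hA.eigenvectorUnitary : Matrix N N ℂ) :=
  hA.spectral_theorem

/-- Key superadditivity: `cfc g X ⊗ cfc h Y - cfc f (X ⊗ Y)` is PSD when
`f (x y) ≤ g x * h y` on the positive reals. -/
lemma key_psd {X : Matrix m m ℂ} {Y : Matrix l l ℂ}
    (hX : X.PosDef) (hY : Y.PosDef) (f g h : ℝ → ℝ)
    (hineq : ∀ x y : ℝ, 0 < x → 0 < y → f (x * y) ≤ g x * h y) :
    ((cfc g X) ⊗ₖ (cfc h Y) - cfc f (X ⊗ₖ Y)).PosSemidef := by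
  set U := hX.1.eigenvectorUnitary
  set V := hY.1.eigenvectorUnitary
  set W := kronUnitary U V with hW
  have hXY : X ⊗ₖ Y = (W : Matrix (m × l) (m × l) ℂ)
      * Matrix.diagonal (fun p : m × l =>
          ((hX.1.eigenvalues p.1 * hY.1.eigenvalues p.2 : ℝ) : ℂ))
      * star (W : Matrix (m × l) (m × l) ℂ) := by
    conv_lhs => rw [spectral_ofReal hX.1, spectral_ofReal hY.1]
    exact conj_kron_conj U V _ _
  have hfXY : cfc f (X ⊗ₖ Y) = (W : Matrix (m × l) (m × l) ℂ)
      * Matrix.diagonal (fun p : m × l =>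
          ((f (hX.1.eigenvalues p.1 * hY.1.eigenvalues p.2) : ℝ) : ℂ))
      * star (W : Matrix (m × l) (m × l) ℂ) := by
    rw [hXY]
    exact cfc_unitary_diag _ _ f
  have hgh : (cfc g X) ⊗ₖ (cfc h Y) = (W : Matrix (m × l) (m × l) ℂ)
      * Matrix.diagonal (fun p : m × l =>
          ((g (hX.1.eigenvalues p.1) * h (hY.1.eigenvalues p.2) : ℝ) : ℂ))
      * star (W : Matrix (m × l) (m × l) ℂ) := by
    rw [cfc_spectral hX.1 g, cfc_spectral hY.1 h]
    exact conj_kron_conj U V _ _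
  rw [hfXY, hgh, ← Matrix.sub_mul, ← Matrix.mul_sub, Matrix.diagonal_sub]
  have hdiag : (Matrix.diagonal (fun p : m × l =>
      ((g (hX.1.eigenvalues p.1) * h (hY.1.eigenvalues p.2) : ℝ) : ℂ)
        - ((f (hX.1.eigenvalues p.1 * hY.1.eigenvalues p.2) : ℝ) : ℂ))).PosSemidef := by
    refine Matrix.PosSemidef.diagonal fun p => ?_
    show (0 : ℂ) ≤ _
    rw [← Complex.ofReal_sub, Complex.zero_le_real]
    exact sub_nonneg.mpr (hineq _ _ (hX.eigenvalues_pos p.1) (hY.eigenvalues_pos p.2))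
  have h2 := hdiag.mul_mul_conjTranspose_same (W : Matrix (m × l) (m × l) ℂ)
  rwa [← Matrix.star_eq_conjTranspose] at h2

/-- Multiplicativity version: equality. -/
lemma key_eq {X : Matrix m m ℂ} {Y : Matrix l l ℂ}
    (hX : X.PosDef) (hY : Y.PosDef) (f g h : ℝ → ℝ)
    (heq : ∀ x y : ℝ, 0 < x → 0 < y → f (x * y) = g x * h y) :
    cfc f (X ⊗ₖ Y) = (cfc g X) ⊗ₖ (cfc h Y) := by
  set U := hX.1.eigenvectorUnitary
  set V := hY.1.eigenvectorUnitary
  set W := kronUnitary U V with hW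
  have hXY : X ⊗ₖ Y = (W : Matrix (m × l) (m × l) ℂ)
      * Matrix.diagonal (fun p : m × l =>
          ((hX.1.eigenvalues p.1 * hY.1.eigenvalues p.2 : ℝ) : ℂ))
      * star (W : Matrix (m × l) (m × l) ℂ) := by
    conv_lhs => rw [spectral_ofReal hX.1, spectral_ofReal hY.1]
    exact conj_kron_conj U V _ _
  have hfun : (fun p : m × l =>
        ((f (hX.1.eigenvalues p.1 * hY.1.eigenvalues p.2) : ℝ) : ℂ))
      = fun p : m × l =>
        ((g (hX.1.eigenvalues p.1) * h (hY.1.eigenvalues p.2) : ℝ) : ℂ) :=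
    funext fun p => by rw [heq _ _ (hX.eigenvalues_pos p.1) (hY.eigenvalues_pos p.2)]
  rw [hXY, cfc_unitary_diag, hfun, cfc_spectral hX.1 g, cfc_spectral hY.1 h, conj_kron_conj]

end Kron

noncomputable section Main
open Kronecker

variable {N : Type} [Fintype N] [DecidableEq N]

lemma mPow_posDef {A : Matrix N N ℂ} (hA : A.PosDef) (r : ℝ) : (mPow A r).PosDef := by
  rw [mPow, cfc_spectral hA.1]
  exact posDef_unitary_diag _ fun i => Real.rpow_pos_of_pos (hA.eigenvalues_pos i) r

lemma mPow_isHermitian {A : Matrix N N ℂ} (hA : A.PosDef) (r : ℝ) :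
    (mPow A r).IsHermitian := by
  rw [mPow, cfc_spectral hA.1]
  exact isHermitian_unitary_diag _ _

variable {m l : Type} [Fintype m] [DecidableEq m] [Fintype l] [DecidableEq l]

lemma mPow_kron {A : Matrix m m ℂ} {B : Matrix l l ℂ} (hA : A.PosDef) (hB : B.PosDef) (r : ℝ) :
    mPow (A ⊗ₖ B) r = (mPow A r) ⊗ₖ (mPow B r) :=
  key_eq hA hB _ _ _ fun x y hx hy => Real.mul_rpow hx.le hy.le


open Kronecker in
/-- **Tensor-product superadditivity of matrix means** (inequality (8) in the paper):
`(A σ C) ⊗ (B σ D) ≥ (A ⊗ B) σ (C ⊗ D)` for a submultiplicative representing function. -/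
theorem stmt_15 (n : ℕ) (hn : 0 < n) (A B C D : Matrix (Fin n) (Fin n) ℂ)
    (hA : A.PosDef) (hB : B.PosDef) (hC : C.PosDef) (hD : D.PosDef)
    (f : ℝ → ℝ) (hf_pos : ∀ x : ℝ, 0 < x → 0 < f x) (hf_one : f 1 = 1)
    (hf_mono : IsMatrixMonotone f)
    (hf_sub : ∀ x y : ℝ, 0 < x → 0 < y → f (x * y) ≤ f x * f y) :
    ((mMean f A C) ⊗ₖ (mMean f B D) - mMean f (A ⊗ₖ B) (C ⊗ₖ D)).PosSemidef := by
  classical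
  set a := mPow A (1/2) with ha
  set a' := mPow A (-(1/2)) with ha'
  set b := mPow B (1/2) with hb
  set b' := mPow B (-(1/2)) with hb'
  set X := a' * C * a' with hXdef
  set Y := b' * D * b' with hYdef
  have hX : X.PosDef := by
    have h1 := posDef_conj hC (mPow_posDef hA (-(1/2))).isUnit
    rwa [(mPow_isHermitian hA (-(1/2))).eq] at h1
  have hY : Y.PosDef := by
    have h1 := posDef_conj hD (mPow_posDef hB (-(1/2))).isUnit
    rwa [(mPow_isHermitian hB (-(1/2))).eq] at h1
  have hinner : (a' ⊗ₖ b') * (C ⊗ₖ D) * (a' ⊗ₖ b') = X ⊗ₖ Y := by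
    rw [← Matrix.mul_kronecker_mul, ← Matrix.mul_kronecker_mul]
  have hmean2 : mMean f (A ⊗ₖ B) (C ⊗ₖ D) = (a ⊗ₖ b) * cfc f (X ⊗ₖ Y) * (a ⊗ₖ b) := by
    rw [mMean, mPow_kron hA hB, mPow_kron hA hB, ← ha, ← hb, ← ha', ← hb', hinner]
  have hmean1 : (mMean f A C) ⊗ₖ (mMean f B D)
      = (a ⊗ₖ b) * ((cfc f X) ⊗ₖ (cfc f Y)) * (a ⊗ₖ b) := by
    rw [mMean, mMean, ← Matrix.mul_kronecker_mul, ← Matrix.mul_kronecker_mul]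
  rw [hmean1, hmean2, ← Matrix.sub_mul, ← Matrix.mul_sub]
  have hkey := key_psd hX hY f f f hf_sub
  have hab : (a ⊗ₖ b)ᴴ = a ⊗ₖ b := by
    rw [kron_conjTranspose, (mPow_isHermitian hA (1/2)).eq, (mPow_isHermitian hB (1/2)).eq]
  have h2 := hkey.mul_mul_conjTranspose_same (a ⊗ₖ b)
  rwa [hab] at h2
end Main
end
end
end

section
/- Let n be a positive integer and let A, B, C, D be n×n positive definite complex matrices with b₁I ≤ A ≤ a₁I, b₂I ≤ B ≤ a₂I, b₃I ≤ C ≤ a₃I, b₄I ≤ D ≤ a₄I for scalars 0 < bᵢ < aᵢ (i = 1,…,4), and let α ∈ (0,1). With f(t) = t^α, set μ = a₁a₂b₁b₂((b₃b₄a₁⁻¹a₂⁻¹)^α − (a₃a₄b₁⁻¹b₂⁻¹)^α)/(b₁b₂b₃b₄ − a₁a₂a₃a₄), ω = α(b₁b₂b₃b₄ (a₃a₄b₁⁻¹b₂⁻¹)^α − a₁a₂a₃a₄ (b₃b₄a₁⁻¹a₂⁻¹)^α) / ((1−α) a₁a₂b₁b₂ ((b₃b₄a₁⁻¹a₂⁻¹)^α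 − (a₃a₄b₁⁻¹b₂⁻¹)^α)), and ν = (1−α)ωμ/α. Then (A∘B) #_α (C∘D) − (A #_α C) ∘ (B #_α D) ≤ ((1−α)(μ/α)^{α/(α−1)} − ν) a₁a₂ I. -/
open scoped ComplexOrder

noncomputable section

lemma mPow_eq {n : Type} [Fintype n] [DecidableEq n] (M : Matrix n n ℂ) (r : ℝ) :
    mPow M r = cfc (fun t : ℝ => t ^ r) M := rfl

open Matrix in
/-- `M = W ⬝ diag d ⬝ W⋆` with `W` unitary and `d` real. -/
structure IsURep {m : Type} [Fintype m] [DecidableEq m]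
    (M W : Matrix m m ℂ) (d : m → ℝ) : Prop where
  unit : W ∈ unitary (Matrix m m ℂ)
  eq : M = W * Matrix.diagonal (fun i => (d i : ℂ)) * star W

namespace IsURep

variable {m : Type} [Fintype m] [DecidableEq m] {M N W : Matrix m m ℂ} {d e : m → ℝ}

open Matrix

lemma isHermitian (h : IsURep M W d) : M.IsHermitian := by
  have : IsSelfAdjoint M := by
    rw [_root_.IsSelfAdjoint, h.eq]
    simp only [StarMul.star_mul, star_star, mul_assoc]
    congr 1
    have : star (diagonal fun i => (d i : ℂ)) = diagonal fun i => (d i : ℂ) := by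
      rw [star_eq_conjTranspose, diagonal_conjTranspose]
      congr! with i
      simp [Pi.star_def]
    rw [this]
  exact this

lemma spectrum_eq (h : IsURep M W d) : spectrum ℝ M = Set.range d := by
  have hu : M = (⟨W, h.unit⟩ : unitary (Matrix m m ℂ)) * diagonal (fun i => (d i : ℂ))
      * (star (⟨W, h.unit⟩ : unitary (Matrix m m ℂ)) : Matrix m m ℂ) := h.eq
  ext x
  conv_lhs => rw [hu, Unitary.spectrum_star_right_conjugate,
    ← spectrum.algebraMap_mem_iff ℂ, spectrum_diagonal]
  constructor
  · rintro ⟨i, hi⟩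
    refine ⟨i, ?_⟩
    have h2 := hi.symm
    simp only [Complex.coe_algebraMap] at h2
    exact_mod_cast h2.symm
  · rintro ⟨i, rfl⟩
    exact ⟨i, by simp [Complex.coe_algebraMap]⟩

lemma mem_spectrum (h : IsURep M W d) (i : m) : d i ∈ spectrum ℝ M := by
  rw [h.spectrum_eq]; exact ⟨i, rfl⟩

end IsURep

namespace IsURep

variable {m : Type} [Fintype m] [DecidableEq m] {M N W : Matrix m m ℂ} {d e : m → ℝ}

open Matrix

/-- Auxiliary star algebra homomorphism realizing the functional calculus through a given
unitary diagonalization. -/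
@[simps]
noncomputable def cfcHomAux (h : IsURep M W d) : C(spectrum ℝ M, ℝ) →⋆ₐ[ℝ] (Matrix m m ℂ) where
  toFun := fun g => W *
    diagonal (RCLike.ofReal ∘ g ∘ (fun i ↦ ⟨d i, h.mem_spectrum i⟩)) * star W
  map_one' := by
    simp only [ContinuousMap.coe_one, Function.comp_def, Pi.one_apply, RCLike.ofReal_one]
    rw [show (diagonal fun _ : m => (1:ℂ)) = (1 : Matrix m m ℂ) from diagonal_one,
      mul_one, Unitary.mul_star_self_of_mem h.unit]
  map_mul' f g := by
    have key {a b c d' e' f' : Matrix m m ℂ} :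
        (a * b * c) * (d' * e' * f') = a * (b * (c * d') * e') * f' := by
      simp only [mul_assoc]
    simp only [key, ContinuousMap.coe_mul, Unitary.star_mul_self_of_mem h.unit, mul_one,
      diagonal_mul_diagonal, Function.comp_apply]
    congr! with i
    simp
  map_zero' := by simp [Pi.zero_def (M := fun _ : m ↦ ℂ)]
  map_add' f g := by
    simp only [ContinuousMap.coe_add, ← add_mul, ← mul_add, diagonal_add, Function.comp_apply]
    congr! with i
    simp
  commutes' r := by
    simp only [Function.comp_def, algebraMap_apply, smul_eq_mul, mul_one]
    rw [← mul_one (algebraMap _ _ _), ← Unitary.mul_star_self_of_mem h.unit,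
      ← Algebra.left_comm, mul_assoc]
    congr!
  map_star' f := by
    simp only [star_trivial, StarMul.star_mul, star_star, star_eq_conjTranspose (diagonal _),
      diagonal_conjTranspose, mul_assoc]
    congr!
    ext
    simp

lemma continuous_cfcHomAux (h : IsURep M W d) : Continuous h.cfcHomAux := by
  have h0 : FiniteDimensional ℝ C(spectrum ℝ M, ℝ) :=
    FiniteDimensional.of_injective (ContinuousMap.coeFnLinearMap ℝ (M := ℝ))
      DFunLike.coe_injective
  exact LinearMap.continuous_of_finiteDimensional (h.cfcHomAux.toLinearMap)

lemma cfcHomAux_id (h : IsURep M W d) :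
    h.cfcHomAux (.restrict (spectrum ℝ M) (.id ℝ)) = M := by
  conv_rhs => rw [h.eq]
  congr!

lemma cfc_eq' (h : IsURep M W d) (f : ℝ → ℝ) :
    cfc f M = W * diagonal (fun i => ((f (d i) : ℝ) : ℂ)) * star W := by
  have hsa : IsSelfAdjoint M := h.isHermitian
  have hcont : ContinuousOn f (spectrum ℝ M) := by
    rw [continuousOn_iff_continuous_restrict]
    fun_prop
  have hu := cfcHom_eq_of_continuous_of_map_id hsa h.cfcHomAux h.continuous_cfcHomAux
    h.cfcHomAux_id
  rw [cfc_apply f M hsa hcont, hu]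
  simp only [cfcHomAux_apply, ContinuousMap.coe_mk, Function.comp_def, Set.restrict_apply]
  rfl

lemma cfc (h : IsURep M W d) (f : ℝ → ℝ) : IsURep (cfc f M) W (fun i => f (d i)) :=
  ⟨h.unit, h.cfc_eq' f⟩

end IsURep

namespace IsURep

variable {m : Type} [Fintype m] [DecidableEq m] {M N W : Matrix m m ℂ} {d e : m → ℝ}

open Matrix

lemma ofDiag (hW : W ∈ unitary (Matrix m m ℂ)) (d : m → ℝ) :
    IsURep (W * Matrix.diagonal (fun i => (d i : ℂ)) * star W) W d := ⟨hW, rfl⟩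

lemma congr_fun (h : IsURep M W d) (hde : ∀ i, d i = e i) : IsURep M W e :=
  funext hde ▸ h

lemma one (hW : W ∈ unitary (Matrix m m ℂ)) : IsURep (1 : Matrix m m ℂ) W (fun _ => 1) := by
  refine ⟨hW, ?_⟩
  rw [show (diagonal fun _ : m => ((1:ℝ):ℂ)) = (1 : Matrix m m ℂ) by simp [diagonal_one],
    mul_one, Unitary.mul_star_self_of_mem hW]

lemma smul (h : IsURep M W d) (r : ℝ) : IsURep (r • M) W (fun i => r * d i) := by
  refine ⟨h.unit, ?_⟩
  have hdg : (diagonal fun i : m => ((r * d i : ℝ) : ℂ))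
      = (r : ℂ) • diagonal (fun i : m => ((d i : ℝ) : ℂ)) := by
    ext i j
    by_cases hij : i = j <;> simp [Matrix.diagonal_apply, hij]
  rw [h.eq, hdg, mul_smul_comm, smul_mul_assoc]
  ext i j
  simp [Matrix.smul_apply, Complex.real_smul]

lemma add (h : IsURep M W d) (h' : IsURep N W e) : IsURep (M + N) W (fun i => d i + e i) := by
  refine ⟨h.unit, ?_⟩
  rw [h.eq, h'.eq, ← add_mul, ← mul_add]
  rw [show ((diagonal fun i : m => ((d i : ℝ) : ℂ)) + diagonal fun i : m => ((e i : ℝ) : ℂ))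
      = diagonal fun i : m => ((d i + e i : ℝ) : ℂ) by
    ext i j; by_cases hij : i = j <;> simp [Matrix.diagonal_apply, hij]]

lemma sub (h : IsURep M W d) (h' : IsURep N W e) : IsURep (M - N) W (fun i => d i - e i) := by
  refine ⟨h.unit, ?_⟩
  rw [h.eq, h'.eq, ← sub_mul, ← mul_sub]
  rw [show ((diagonal fun i : m => ((d i : ℝ) : ℂ)) - diagonal fun i : m => ((e i : ℝ) : ℂ))
      = diagonal fun i : m => ((d i - e i : ℝ) : ℂ) by
    ext i j; by_cases hij : i = j <;> simp [Matrix.diagonal_apply, hij]]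

lemma mul (h : IsURep M W d) (h' : IsURep N W e) : IsURep (M * N) W (fun i => d i * e i) := by
  refine ⟨h.unit, ?_⟩
  rw [h.eq, h'.eq]
  have key : ∀ a b c d' e' f' : Matrix m m ℂ,
      (a * b * c) * (d' * e' * f') = a * (b * (c * d') * e') * f' := by
    intros; simp only [mul_assoc]
  rw [key, Unitary.star_mul_self_of_mem h.unit, mul_one, diagonal_mul_diagonal]
  congr! 3 with i
  push_cast
  ring

lemma posSemidef (h : IsURep M W d) (hd : ∀ i, 0 ≤ d i) : M.PosSemidef := by
  rw [h.eq, Matrix.star_eq_conjTranspose]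
  refine Matrix.PosSemidef.mul_mul_conjTranspose_same ?_ W
  refine Matrix.PosSemidef.diagonal fun i => ?_
  simpa using (by exact_mod_cast hd i : (0:ℂ) ≤ (d i : ℂ))

lemma posSemidef_smul_one_sub (h : IsURep M W d) {a : ℝ} (hd : ∀ i, d i ≤ a) :
    (a • (1 : Matrix m m ℂ) - M).PosSemidef :=
  (((IsURep.one h.unit).smul a).sub h).posSemidef fun i => by simp [sub_nonneg, hd i]

lemma posSemidef_sub_smul_one (h : IsURep M W d) {b : ℝ} (hd : ∀ i, b ≤ d i) :
    (M - b • (1 : Matrix m m ℂ)).PosSemidef :=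
  (h.sub ((IsURep.one h.unit).smul b)).posSemidef fun i => by simp [sub_nonneg, hd i]

lemma conj_diag (h : IsURep M W d) :
    star W * M * W = diagonal (fun i => ((d i : ℝ) : ℂ)) := by
  rw [h.eq]
  calc star W * (W * diagonal (fun i => ((d i : ℝ) : ℂ)) * star W) * W
      = (star W * W) * diagonal (fun i => ((d i : ℝ) : ℂ)) * (star W * W) := by
        simp only [mul_assoc]
    _ = diagonal (fun i => ((d i : ℝ) : ℂ)) := by
        rw [Unitary.star_mul_self_of_mem h.unit, one_mul, mul_one]

/-- Recover entrywise bounds from semidefinite bounds. -/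
lemma le_of_posSemidef_sub (h : IsURep M W d) {b : ℝ}
    (hpsd : (M - b • (1 : Matrix m m ℂ)).PosSemidef) : ∀ i, b ≤ d i := by
  have hrep : IsURep (M - b • (1 : Matrix m m ℂ)) W (fun i => d i - b) :=
    (h.sub ((IsURep.one h.unit).smul b)).congr_fun fun i => by simp
  have hdiag := hrep.conj_diag
  have hp2 : (diagonal (fun i => ((d i - b : ℝ) : ℂ))).PosSemidef := by
    have hc := hpsd.mul_mul_conjTranspose_same (star W)
    rw [Matrix.star_eq_conjTranspose W, conjTranspose_conjTranspose] at hc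
    rw [← Matrix.star_eq_conjTranspose W] at hc
    rwa [hdiag] at hc
  intro i
  have h3 := Matrix.posSemidef_diagonal_iff.mp hp2 i
  have h4 : (0:ℝ) ≤ d i - b := by exact_mod_cast h3
  linarith

/-- Recover entrywise upper bounds from semidefinite bounds. -/
lemma le_of_posSemidef_sub' (h : IsURep M W d) {a : ℝ}
    (hpsd : (a • (1 : Matrix m m ℂ) - M).PosSemidef) : ∀ i, d i ≤ a := by
  have hrep : IsURep (a • (1 : Matrix m m ℂ) - M) W (fun i => a - d i) :=
    (((IsURep.one h.unit).smul a).sub h).congr_fun fun i => by simp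
  have hdiag := hrep.conj_diag
  have hp2 : (diagonal (fun i => ((a - d i : ℝ) : ℂ))).PosSemidef := by
    have hc := hpsd.mul_mul_conjTranspose_same (star W)
    rw [Matrix.star_eq_conjTranspose W, conjTranspose_conjTranspose] at hc
    rw [← Matrix.star_eq_conjTranspose W] at hc
    rwa [hdiag] at hc
  intro i
  have h3 := Matrix.posSemidef_diagonal_iff.mp hp2 i
  have h4 : (0:ℝ) ≤ a - d i := by exact_mod_cast h3
  linarith

end IsURep

open Matrix Kronecker in
lemma conjTranspose_kron {m p : Type} [Fintype m] [Fintype p]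
    (X : Matrix m m ℂ) (Y : Matrix p p ℂ) :
    (X ⊗ₖ Y)ᴴ = Xᴴ ⊗ₖ Yᴴ := by
  ext i j
  simp [Matrix.conjTranspose_apply, Matrix.kroneckerMap_apply, mul_comm]

open Matrix Kronecker in
lemma unitary_kron {m p : Type} [Fintype m] [Fintype p] [DecidableEq m] [DecidableEq p]
    {W : Matrix m m ℂ} {V : Matrix p p ℂ}
    (hW : W ∈ unitary (Matrix m m ℂ)) (hV : V ∈ unitary (Matrix p p ℂ)) :
    W ⊗ₖ V ∈ unitary (Matrix (m × p) (m × p) ℂ) := by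
  rw [Unitary.mem_iff] at hW hV ⊢
  constructor
  · rw [Matrix.star_eq_conjTranspose, conjTranspose_kron, ← Matrix.mul_kronecker_mul,
      ← Matrix.star_eq_conjTranspose, ← Matrix.star_eq_conjTranspose, hW.1, hV.1,
      Matrix.one_kronecker_one]
  · rw [Matrix.star_eq_conjTranspose, conjTranspose_kron, ← Matrix.mul_kronecker_mul,
      ← Matrix.star_eq_conjTranspose, ← Matrix.star_eq_conjTranspose, hW.2, hV.2,
      Matrix.one_kronecker_one]

open Matrix Kronecker in
lemma IsURep.kron {m p : Type} [Fintype m] [Fintype p] [DecidableEq m] [DecidableEq p]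
    {M W : Matrix m m ℂ} {d : m → ℝ} {N V : Matrix p p ℂ} {e : p → ℝ}
    (h : IsURep M W d) (h' : IsURep N V e) :
    IsURep (M ⊗ₖ N) (W ⊗ₖ V) (fun q => d q.1 * e q.2) := by
  refine ⟨unitary_kron h.unit h'.unit, ?_⟩
  rw [h.eq, h'.eq]
  simp only [Matrix.star_eq_conjTranspose]
  rw [Matrix.mul_kronecker_mul, Matrix.mul_kronecker_mul, ← conjTranspose_kron,
    Matrix.diagonal_kronecker_diagonal]
  congr 2
  funext q
  push_cast
  ring

open Matrix Kronecker in
lemma posSemidef_kron {m p : Type} [Fintype m] [Fintype p] [DecidableEq m] [DecidableEq p]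
    {X : Matrix m m ℂ} {Y : Matrix p p ℂ}
    (hX : X.PosSemidef) (hY : Y.PosSemidef) : (X ⊗ₖ Y).PosSemidef := by
  obtain ⟨R, hR⟩ := (by open scoped MatrixOrder in exact CStarAlgebra.nonneg_iff_eq_star_mul_self.mp hX.nonneg :
    ∃ R : Matrix m m ℂ, X = Rᴴ * R)
  obtain ⟨S, hS⟩ := (by open scoped MatrixOrder in exact CStarAlgebra.nonneg_iff_eq_star_mul_self.mp hY.nonneg :
    ∃ S : Matrix p p ℂ, Y = Sᴴ * S)
  rw [hR, hS, Matrix.mul_kronecker_mul, ← conjTranspose_kron]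
  exact Matrix.posSemidef_conjTranspose_mul_self _

open Matrix Kronecker in
lemma hadamard_eq_submatrix_kron {m : Type} [Fintype m] [DecidableEq m]
    (X Y : Matrix m m ℂ) :
    X.hadamard Y = (X ⊗ₖ Y).submatrix (fun i => (i, i)) (fun i => (i, i)) := by
  ext i j
  simp [Matrix.hadamard_apply, Matrix.kroneckerMap_apply]

open Matrix in
lemma posSemidef_hadamard {m : Type} [Fintype m] [DecidableEq m]
    {X Y : Matrix m m ℂ} (hX : X.PosSemidef) (hY : Y.PosSemidef) :
    (X.hadamard Y).PosSemidef := by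
  rw [hadamard_eq_submatrix_kron]
  exact (posSemidef_kron hX hY).submatrix _

section Scalar

lemma chord_le_rpow {α h h' μ ν : ℝ} (hα0 : 0 < α) (hα1 : α < 1) (hh : 0 < h) (hhh : h < h')
    (hμeq : μ = (h ^ α - h' ^ α) / (h - h'))
    (hνeq : ν = (h * h' ^ α - h' * h ^ α) / (h - h'))
    {t : ℝ} (ht1 : h ≤ t) (ht2 : t ≤ h') :
    μ * t + ν ≤ t ^ α := by
  have hcc := Real.concaveOn_rpow hα0.le hα1.le
  have hd : (0:ℝ) < h' - h := by linarith
  have hl1 : (0:ℝ) ≤ (h' - t)/(h' - h) := div_nonneg (by linarith) hd.le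
  have hl2 : (0:ℝ) ≤ (t - h)/(h' - h) := div_nonneg (by linarith) hd.le
  have hsum : (h' - t)/(h' - h) + (t - h)/(h' - h) = 1 := by field_simp; ring
  have hmem1 : h ∈ Set.Ici (0:ℝ) := le_of_lt hh
  have hmem2 : h' ∈ Set.Ici (0:ℝ) := by simp [Set.mem_Ici]; linarith
  have hkey := hcc.2 hmem1 hmem2 hl1 hl2 hsum
  simp only [smul_eq_mul] at hkey
  have hteq : (h' - t)/(h' - h) * h + (t - h)/(h' - h) * h' = t := by field_simp; ring
  rw [hteq] at hkey
  refine le_trans (le_of_eq ?_) hkey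
  rw [hμeq, hνeq]
  have hne : h - h' ≠ 0 := by linarith
  field_simp
  ring

lemma rpow_le_tangent {α μ : ℝ} (hα0 : 0 < α) (hα1 : α < 1) (hμ : 0 < μ)
    {t : ℝ} (ht : 0 ≤ t) :
    t ^ α ≤ μ * t + (1 - α) * (μ / α) ^ (α / (α - 1)) := by
  set s : ℝ := (μ / α) ^ ((1:ℝ) / (α - 1)) with hs
  have hμα : (0:ℝ) < μ / α := by positivity
  have hspos : 0 < s := Real.rpow_pos_of_pos hμα _
  have hgm := Real.geom_mean_le_arith_mean2_weighted hα0.le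
    (show (0:ℝ) ≤ 1 - α by linarith) ht hspos.le (show α + (1 - α) = 1 by ring)
  have hs1 : s ^ (α - 1) = μ / α := by
    rw [hs, ← Real.rpow_mul hμα.le, one_div, inv_mul_cancel₀ (by linarith : α - 1 ≠ 0),
      Real.rpow_one]
  have hmul := mul_le_mul_of_nonneg_right hgm hμα.le
  have hlhs : t ^ α * s ^ (1 - α) * (μ / α) = t ^ α := by
    rw [← hs1, mul_assoc, ← Real.rpow_add hspos]
    norm_num
  rw [hlhs] at hmul
  refine hmul.trans (le_of_eq ?_)
  have hαne : α ≠ 0 := hα0.ne'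
  have hfin : (μ / α) * s = (μ / α) ^ (α / (α - 1)) := by
    have h1 : α / (α - 1) = 1 + 1 / (α - 1) := by
      have hne : α - 1 ≠ 0 := by linarith
      field_simp
      ring
    rw [h1, Real.rpow_add hμα, Real.rpow_one, hs]
  have : μ / α * α = μ := div_mul_cancel₀ _ hαne
  nlinarith [hfin, this]

end Scalar

section MuNu

variable {a₁ b₁ a₂ b₂ a₃ b₃ a₄ b₄ α μ ω ν : ℝ}

lemma mu_nu_formulas
    (hb₁ : 0 < b₁) (hba₁ : b₁ < a₁) (hb₂ : 0 < b₂) (hba₂ : b₂ < a₂)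
    (hb₃ : 0 < b₃) (hba₃ : b₃ < a₃) (hb₄ : 0 < b₄) (hba₄ : b₄ < a₄)
    (hα : α ∈ Set.Ioo (0 : ℝ) 1)
    (hμ : μ = a₁ * a₂ * b₁ * b₂ *
        ((b₃ * b₄ * a₁⁻¹ * a₂⁻¹) ^ α - (a₃ * a₄ * b₁⁻¹ * b₂⁻¹) ^ α) /
      (b₁ * b₂ * b₃ * b₄ - a₁ * a₂ * a₃ * a₄))
    (hω : ω = α * (b₁ * b₂ * b₃ * b₄ * (a₃ * a₄ * b₁⁻¹ * b₂⁻¹) ^ α -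
        a₁ * a₂ * a₃ * a₄ * (b₃ * b₄ * a₁⁻¹ * a₂⁻¹) ^ α) /
      ((1 - α) * (a₁ * a₂ * b₁ * b₂) *
        ((b₃ * b₄ * a₁⁻¹ * a₂⁻¹) ^ α - (a₃ * a₄ * b₁⁻¹ * b₂⁻¹) ^ α)))
    (hν : ν = (1 - α) * ω * μ / α) :
    μ = ((b₃ * b₄ * a₁⁻¹ * a₂⁻¹) ^ α - (a₃ * a₄ * b₁⁻¹ * b₂⁻¹) ^ α) /
        ((b₃ * b₄ * a₁⁻¹ * a₂⁻¹) - (a₃ * a₄ * b₁⁻¹ * b₂⁻¹)) ∧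
      ν = ((b₃ * b₄ * a₁⁻¹ * a₂⁻¹) * (a₃ * a₄ * b₁⁻¹ * b₂⁻¹) ^ α -
          (a₃ * a₄ * b₁⁻¹ * b₂⁻¹) * (b₃ * b₄ * a₁⁻¹ * a₂⁻¹) ^ α) /
        ((b₃ * b₄ * a₁⁻¹ * a₂⁻¹) - (a₃ * a₄ * b₁⁻¹ * b₂⁻¹)) := by
  obtain ⟨hα0, hα1⟩ := hα
  have ha₁ : 0 < a₁ := hb₁.trans hba₁
  have ha₂ : 0 < a₂ := hb₂.trans hba₂
  have ha₃ : 0 < a₃ := hb₃.trans hba₃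
  have ha₄ : 0 < a₄ := hb₄.trans hba₄
  set h : ℝ := b₃ * b₄ * a₁⁻¹ * a₂⁻¹ with hh
  set h' : ℝ := a₃ * a₄ * b₁⁻¹ * b₂⁻¹ with hh'
  have hhpos : 0 < h := by rw [hh]; positivity
  have hlt : h < h' := by
    have key : b₃ * b₄ * (b₁ * b₂) < a₃ * a₄ * (a₁ * a₂) := by
      have l1 : b₃ * b₄ < a₃ * a₄ := mul_lt_mul'' hba₃ hba₄ hb₃.le hb₄.le
      have l2 : b₁ * b₂ < a₁ * a₂ := mul_lt_mul'' hba₁ hba₂ hb₁.le hb₂.le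
      exact mul_lt_mul'' l1 l2 (by positivity) (by positivity)
    have h1 : h = (b₃ * b₄) / (a₁ * a₂) := by rw [hh]; field_simp
    have h2 : h' = (a₃ * a₄) / (b₁ * b₂) := by rw [hh']; field_simp
    rw [h1, h2, div_lt_div_iff₀ (by positivity) (by positivity)]
    exact key
  have hX0 : (0:ℝ) < h ^ α := Real.rpow_pos_of_pos hhpos α
  have hXlt : h ^ α < h' ^ α := Real.rpow_lt_rpow hhpos.le hlt hα0
  have e1 : b₁ * b₂ * b₃ * b₄ = a₁ * a₂ * b₁ * b₂ * h := by rw [hh]; field_simp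
  have e2 : a₁ * a₂ * a₃ * a₄ = a₁ * a₂ * b₁ * b₂ * h' := by rw [hh']; field_simp
  have hcne : a₁ * a₂ * b₁ * b₂ ≠ 0 := by positivity
  have hXne : h ^ α - h' ^ α ≠ 0 := by intro hc; nlinarith
  have hDne : h - h' ≠ 0 := by intro hc; nlinarith
  have hαne : α ≠ 0 := hα0.ne'
  have hα1ne : (1:ℝ) - α ≠ 0 := by intro hc; nlinarith
  have hμ2 : μ = (h ^ α - h' ^ α) / (h - h') := by
    rw [hμ, show b₁ * b₂ * b₃ * b₄ - a₁ * a₂ * a₃ * a₄ = a₁ * a₂ * b₁ * b₂ * (h - h') by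
      rw [e1, e2]; ring, mul_div_mul_left _ _ hcne]
  refine ⟨hμ2, ?_⟩
  rw [hν, hω, hμ2, e1, e2]
  field_simp

end MuNu

section Utilities

open Matrix

variable {m : Type} [Fintype m] [DecidableEq m]

lemma posSemidef_real_smul {M : Matrix m m ℂ} (hM : M.PosSemidef) {c : ℝ} (hc : 0 ≤ c) :
    (c • M).PosSemidef := by
  constructor
  · have h1 : (c • M)ᴴ = c • Mᴴ := by
      ext i j
      simp [Matrix.conjTranspose_apply, Complex.real_smul]
    rw [Matrix.IsHermitian, h1, hM.1]
  · exact (hM.smul hc).2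

lemma posSemidef_one_c : (1 : Matrix m m ℂ).PosSemidef := Matrix.PosDef.one.posSemidef

lemma isHermitian_hadamard {X Y : Matrix m m ℂ} (hX : X.IsHermitian) (hY : Y.IsHermitian) :
    (X.hadamard Y).IsHermitian := by
  have hXa : ∀ i j, star (X j i) = X i j := fun i j => by
    conv_rhs => rw [← hX]
    simp [Matrix.conjTranspose_apply]
  have hYa : ∀ i j, star (Y j i) = Y i j := fun i j => by
    conv_rhs => rw [← hY]
    simp [Matrix.conjTranspose_apply]
  ext i j
  simp [Matrix.conjTranspose_apply, Matrix.hadamard_apply, hXa, hYa]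

lemma isHermitian_conj_conj {Q X : Matrix m m ℂ} (hQ : Q.IsHermitian) (hX : X.IsHermitian) :
    (X * Q * X).IsHermitian := by
  rw [Matrix.IsHermitian, Matrix.conjTranspose_mul, Matrix.conjTranspose_mul, hQ.eq, hX.eq,
    mul_assoc]

lemma posSemidef_conj_herm {Q X : Matrix m m ℂ} (hQ : Q.PosSemidef) (hX : X.IsHermitian) :
    (X * Q * X).PosSemidef := by
  have := hQ.mul_mul_conjTranspose_same X
  rwa [hX.eq] at this

open Matrix in
lemma Matrix.IsHermitian.isURep {M : Matrix m m ℂ} (hM : M.IsHermitian) :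
    IsURep M (hM.eigenvectorUnitary : Matrix m m ℂ) hM.eigenvalues := by
  refine ⟨SetLike.coe_mem _, ?_⟩
  have hsp := hM.spectral_theorem
  convert hsp using 3
  simp [Function.comp_def]

lemma IsURep.eq_of {M N W : Matrix m m ℂ} {d e : m → ℝ}
    (h1 : IsURep M W d) (h2 : IsURep N W e) (hde : ∀ i, d i = e i) : M = N := by
  rw [h1.eq, h2.eq]
  have : d = e := funext hde
  rw [this]

lemma IsURep.eq_one {M W : Matrix m m ℂ} {d : m → ℝ}
    (h : IsURep M W d) (hd : ∀ i, d i = 1) : M = 1 :=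
  h.eq_of (IsURep.one h.unit) hd

end Utilities

section BoundIdentities

open Matrix Kronecker

variable {m p : Type} [Fintype m] [DecidableEq m] [Fintype p] [DecidableEq p]

lemma hadamard_ub_identity (A B : Matrix m m ℂ) (s t : ℝ) :
    (s * t) • (1 : Matrix m m ℂ) - A.hadamard B
      = ((s • 1 - A).hadamard B) + s • ((1 : Matrix m m ℂ).hadamard (t • 1 - B)) := by
  ext i j
  by_cases hij : i = j <;>
    simp [Matrix.hadamard_apply, Matrix.one_apply, hij, Complex.real_smul] <;> ring

lemma hadamard_lb_identity (A B : Matrix m m ℂ) (s t : ℝ) :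
    A.hadamard B - (s * t) • (1 : Matrix m m ℂ)
      = ((A - s • 1).hadamard B) + s • ((1 : Matrix m m ℂ).hadamard (B - t • 1)) := by
  ext i j
  by_cases hij : i = j <;>
    simp [Matrix.hadamard_apply, Matrix.one_apply, hij, Complex.real_smul] <;> ring

lemma kron_ub_identity (A : Matrix m m ℂ) (B : Matrix p p ℂ) (s t : ℝ) :
    (s * t) • (1 : Matrix (m × p) (m × p) ℂ) - A ⊗ₖ B
      = ((s • 1 - A) ⊗ₖ B) + s • ((1 : Matrix m m ℂ) ⊗ₖ (t • 1 - B)) := by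
  ext ⟨i, k⟩ ⟨j, l⟩
  by_cases hij : i = j <;> by_cases hkl : k = l <;>
    simp [Matrix.kroneckerMap_apply, Matrix.one_apply, hij, hkl, Complex.real_smul,
      Prod.ext_iff] <;> ring

lemma kron_lb_identity (A : Matrix m m ℂ) (B : Matrix p p ℂ) (s t : ℝ) :
    A ⊗ₖ B - (s * t) • (1 : Matrix (m × p) (m × p) ℂ)
      = ((A - s • 1) ⊗ₖ B) + s • ((1 : Matrix m m ℂ) ⊗ₖ (B - t • 1)) := by
  ext ⟨i, k⟩ ⟨j, l⟩
  by_cases hij : i = j <;> by_cases hkl : k = l <;>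
    simp [Matrix.kroneckerMap_apply, Matrix.one_apply, hij, hkl, Complex.real_smul,
      Prod.ext_iff] <;> ring

end BoundIdentities

section Sandwich

open Matrix

variable {m : Type} [Fintype m] [DecidableEq m]

lemma sandwich (R S Rm : Matrix m m ℂ) (hRm : Rm.IsHermitian) (hRmR : Rm * R * Rm = 1)
    {la ua lb ub h h' : ℝ}
    (hR1 : (ua • (1 : Matrix m m ℂ) - R).PosSemidef) (hR2 : (R - la • 1).PosSemidef)
    (hS1 : (ub • (1 : Matrix m m ℂ) - S).PosSemidef) (hS2 : (S - lb • 1).PosSemidef)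
    (hhua : h * ua = lb) (hh'la : h' * la = ub) (hhpos : 0 ≤ h) (hh'pos : 0 ≤ h') :
    (Rm * S * Rm - h • (1 : Matrix m m ℂ)).PosSemidef ∧
      (h' • (1 : Matrix m m ℂ) - Rm * S * Rm).PosSemidef := by
  have econj : ∀ T : Matrix m m ℂ, Rm * (h • T) * Rm = h • (Rm * T * Rm) := fun T => by
    rw [mul_smul_comm, smul_mul_assoc]
  have econj' : ∀ T : Matrix m m ℂ, Rm * (h' • T) * Rm = h' • (Rm * T * Rm) := fun T => by
    rw [mul_smul_comm, smul_mul_assoc]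
  constructor
  · have hlow : (S - h • R).PosSemidef := by
      have e : S - h • R = (S - lb • 1) + h • (ua • (1 : Matrix m m ℂ) - R) := by
        rw [smul_sub, smul_smul, hhua]
        abel
      rw [e]
      exact hS2.add (posSemidef_real_smul hR1 hhpos)
    have e2 : Rm * S * Rm - h • (1 : Matrix m m ℂ) = Rm * (S - h • R) * Rm := by
      rw [mul_sub, sub_mul, econj, hRmR]
    rw [e2]
    exact posSemidef_conj_herm hlow hRm
  · have hup : (h' • R - S).PosSemidef := by
      have e : h' • R - S = (ub • (1 : Matrix m m ℂ) - S) + h' • (R - la • 1) := by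
        rw [smul_sub, smul_smul, hh'la]
        abel
      rw [e]
      exact hS1.add (posSemidef_real_smul hR2 hh'pos)
    have e2 : h' • (1 : Matrix m m ℂ) - Rm * S * Rm = Rm * (h' • R - S) * Rm := by
      rw [mul_sub, sub_mul, econj', hRmR]
    rw [e2]
    exact posSemidef_conj_herm hup hRm

end Sandwich

open Matrix Kronecker in
lemma conj_comb {m : Type} [Fintype m] [DecidableEq m] (X Z F : Matrix m m ℂ) (c₁ c₂ : ℝ) :
    X * (c₁ • Z + c₂ • (1 : Matrix m m ℂ) - F) * X
      = c₁ • (X * Z * X) + c₂ • (X * X) - X * F * X := by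
  rw [mul_sub, sub_mul, mul_add, add_mul]
  simp only [mul_smul_comm, smul_mul_assoc, mul_one]

open Matrix Kronecker in
lemma conj_comb' {m : Type} [Fintype m] [DecidableEq m] (X Z F : Matrix m m ℂ) (c₁ c₂ : ℝ) :
    X * (F - (c₁ • Z + c₂ • (1 : Matrix m m ℂ))) * X
      = X * F * X - (c₁ • (X * Z * X) + c₂ • (X * X)) := by
  rw [mul_sub, sub_mul, mul_add, add_mul]
  simp only [mul_smul_comm, smul_mul_assoc, mul_one]

open Matrix Kronecker in
/-- **Theorem 4.1 (iv)**: additive reverse inequality for the Hadamard product and the weighted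
geometric mean `f(t) = t^α`. -/
theorem stmt_18 (n : ℕ) (hn : 0 < n) (A B C D : Matrix (Fin n) (Fin n) ℂ)
    (hA : A.PosDef) (hB : B.PosDef) (hC : C.PosDef) (hD : D.PosDef)
    (a₁ b₁ a₂ b₂ a₃ b₃ a₄ b₄ : ℝ)
    (hb₁ : 0 < b₁) (hba₁ : b₁ < a₁) (hb₂ : 0 < b₂) (hba₂ : b₂ < a₂)
    (hb₃ : 0 < b₃) (hba₃ : b₃ < a₃) (hb₄ : 0 < b₄) (hba₄ : b₄ < a₄)
    (hA₁ : (A - b₁ • 1).PosSemidef) (hA₂ : (a₁ • 1 - A).PosSemidef)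
    (hB₁ : (B - b₂ • 1).PosSemidef) (hB₂ : (a₂ • 1 - B).PosSemidef)
    (hC₁ : (C - b₃ • 1).PosSemidef) (hC₂ : (a₃ • 1 - C).PosSemidef)
    (hD₁ : (D - b₄ • 1).PosSemidef) (hD₂ : (a₄ • 1 - D).PosSemidef)
    (α : ℝ) (hα : α ∈ Set.Ioo (0 : ℝ) 1)
    (μ ω ν : ℝ)
    (hμ : μ = a₁ * a₂ * b₁ * b₂ *
        ((b₃ * b₄ * a₁⁻¹ * a₂⁻¹) ^ α - (a₃ * a₄ * b₁⁻¹ * b₂⁻¹) ^ α) /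
      (b₁ * b₂ * b₃ * b₄ - a₁ * a₂ * a₃ * a₄))
    (hω : ω = α * (b₁ * b₂ * b₃ * b₄ * (a₃ * a₄ * b₁⁻¹ * b₂⁻¹) ^ α -
        a₁ * a₂ * a₃ * a₄ * (b₃ * b₄ * a₁⁻¹ * a₂⁻¹) ^ α) /
      ((1 - α) * (a₁ * a₂ * b₁ * b₂) *
        ((b₃ * b₄ * a₁⁻¹ * a₂⁻¹) ^ α - (a₃ * a₄ * b₁⁻¹ * b₂⁻¹) ^ α)))
    (hν : ν = (1 - α) * ω * μ / α) :
    ((((1 - α) * (μ / α) ^ (α / (α - 1)) - ν) * (a₁ * a₂)) • (1 : Matrix (Fin n) (Fin n) ℂ) -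
        (mGeoMean α (Matrix.hadamard A B) (Matrix.hadamard C D) -
          Matrix.hadamard (mGeoMean α A C) (mGeoMean α B D))).PosSemidef := by
  obtain ⟨hα0, hα1⟩ := hα
  have ha₁ : 0 < a₁ := hb₁.trans hba₁
  have ha₂ : 0 < a₂ := hb₂.trans hba₂
  have ha₃ : 0 < a₃ := hb₃.trans hba₃
  have ha₄ : 0 < a₄ := hb₄.trans hba₄
  obtain ⟨hμf, hνf⟩ := mu_nu_formulas hb₁ hba₁ hb₂ hba₂ hb₃ hba₃ hb₄ hba₄ ⟨hα0, hα1⟩ hμ hω hν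
  set h : ℝ := b₃ * b₄ * a₁⁻¹ * a₂⁻¹ with hhdef
  set h' : ℝ := a₃ * a₄ * b₁⁻¹ * b₂⁻¹ with hh'def
  have hhpos : 0 < h := by rw [hhdef]; positivity
  have hh'pos : 0 < h' := by rw [hh'def]; positivity
  have hlt : h < h' := by
    have key : b₃ * b₄ * (b₁ * b₂) < a₃ * a₄ * (a₁ * a₂) := by
      have l1 : b₃ * b₄ < a₃ * a₄ := mul_lt_mul'' hba₃ hba₄ hb₃.le hb₄.le
      have l2 : b₁ * b₂ < a₁ * a₂ := mul_lt_mul'' hba₁ hba₂ hb₁.le hb₂.le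
      exact mul_lt_mul'' l1 l2 (by positivity) (by positivity)
    have h1 : h = (b₃ * b₄) / (a₁ * a₂) := by rw [hhdef]; field_simp
    have h2 : h' = (a₃ * a₄) / (b₁ * b₂) := by rw [hh'def]; field_simp
    rw [h1, h2, div_lt_div_iff₀ (by positivity) (by positivity)]
    exact key
  have hXlt : h ^ α < h' ^ α := Real.rpow_lt_rpow hhpos.le hlt hα0
  have hμpos : 0 < μ := by
    rw [hμf, div_pos_iff]
    right
    constructor <;> linarith
  set K : ℝ := (1 - α) * (μ / α) ^ (α / (α - 1)) - ν with hKdef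
  have tangent : ∀ t : ℝ, 0 ≤ t → t ^ α ≤ μ * t + (ν + K) := by
    intro t ht
    have := rpow_le_tangent hα0 hα1 hμpos ht
    rw [hKdef]
    linarith
  have chord : ∀ t : ℝ, h ≤ t → t ≤ h' → μ * t + ν ≤ t ^ α := fun t h1 h2 =>
    chord_le_rpow hα0 hα1 hhpos hlt hμf hνf h1 h2
  have hK0 : 0 ≤ K := by
    have c1 := chord h le_rfl hlt.le
    have c2 := tangent h hhpos.le
    linarith
  have hhua : h * (a₁ * a₂) = b₃ * b₄ := by rw [hhdef]; field_simp
  have hh'la : h' * (b₁ * b₂) = a₃ * a₄ := by rw [hh'def]; field_simp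
  -- Part I : the Hadamard-product side
  set f : ℝ → ℝ := fun t : ℝ => t ^ α with hfdef
  set P : Matrix (Fin n) (Fin n) ℂ := A.hadamard B with hPdef
  set Q : Matrix (Fin n) (Fin n) ℂ := C.hadamard D with hQdef
  have hPher : P.IsHermitian := isHermitian_hadamard hA.1 hB.1
  have hQher : Q.IsHermitian := isHermitian_hadamard hC.1 hD.1
  have hPub : ((a₁ * a₂) • (1 : Matrix (Fin n) (Fin n) ℂ) - P).PosSemidef := by
    rw [hPdef, hadamard_ub_identity A B a₁ a₂]
    exact (posSemidef_hadamard hA₂ hB.posSemidef).add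
      (posSemidef_real_smul (posSemidef_hadamard posSemidef_one_c hB₂) ha₁.le)
  have hPlb : (P - (b₁ * b₂) • (1 : Matrix (Fin n) (Fin n) ℂ)).PosSemidef := by
    rw [hPdef, hadamard_lb_identity A B b₁ b₂]
    exact (posSemidef_hadamard hA₁ hB.posSemidef).add
      (posSemidef_real_smul (posSemidef_hadamard posSemidef_one_c hB₁) hb₁.le)
  have hQub : ((a₃ * a₄) • (1 : Matrix (Fin n) (Fin n) ℂ) - Q).PosSemidef := by
    rw [hQdef, hadamard_ub_identity C D a₃ a₄]
    exact (posSemidef_hadamard hC₂ hD.posSemidef).add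
      (posSemidef_real_smul (posSemidef_hadamard posSemidef_one_c hD₂) ha₃.le)
  have hQlb : (Q - (b₃ * b₄) • (1 : Matrix (Fin n) (Fin n) ℂ)).PosSemidef := by
    rw [hQdef, hadamard_lb_identity C D b₃ b₄]
    exact (posSemidef_hadamard hC₁ hD.posSemidef).add
      (posSemidef_real_smul (posSemidef_hadamard posSemidef_one_c hD₁) hb₃.le)
  -- eigen data of P
  have repP := hPher.isURep
  have hdPl := repP.le_of_posSemidef_sub hPlb
  have hdPu := repP.le_of_posSemidef_sub' hPub
  have hdP0 : ∀ i, 0 < hPher.eigenvalues i := fun i =>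
    lt_of_lt_of_le (by positivity) (hdPl i)
  -- rpow helpers
  have key1 : ∀ x : ℝ, 0 < x → x ^ ((1:ℝ)/2) * x ^ (-((1:ℝ)/2)) = 1 := fun x hx => by
    rw [← Real.rpow_add hx]
    norm_num
  have key1' : ∀ x : ℝ, 0 < x → x ^ (-((1:ℝ)/2)) * x ^ ((1:ℝ)/2) = 1 := fun x hx => by
    rw [← Real.rpow_add hx]
    norm_num
  have key2 : ∀ x : ℝ, 0 < x → x ^ ((1:ℝ)/2) * x ^ ((1:ℝ)/2) = x := fun x hx => by
    rw [← Real.rpow_add hx]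
    norm_num
  have key3 : ∀ x : ℝ, 0 < x → x ^ (-((1:ℝ)/2)) * x * x ^ (-((1:ℝ)/2)) = 1 := fun x hx => by
    have h1 : x ^ (-((1:ℝ)/2)) * x = x ^ ((1:ℝ)/2) := by
      rw [← Real.rpow_add_one hx.ne']
      norm_num
    rw [h1, key1 x hx]
  set Ph : Matrix (Fin n) (Fin n) ℂ := mPow P (1/2) with hPhdef
  set Pm : Matrix (Fin n) (Fin n) ℂ := mPow P (-(1/2)) with hPmdef
  have repPh : IsURep Ph (hPher.eigenvectorUnitary : Matrix (Fin n) (Fin n) ℂ)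
      (fun i => hPher.eigenvalues i ^ ((1:ℝ)/2)) := repP.cfc _
  have repPm : IsURep Pm (hPher.eigenvectorUnitary : Matrix (Fin n) (Fin n) ℂ)
      (fun i => hPher.eigenvalues i ^ (-((1:ℝ)/2))) := repP.cfc _
  have hPhPm : Ph * Pm = 1 := (repPh.mul repPm).eq_one fun i => key1 _ (hdP0 i)
  have hPmPh : Pm * Ph = 1 := (repPm.mul repPh).eq_one fun i => key1' _ (hdP0 i)
  have hPhPh : Ph * Ph = P := (repPh.mul repPh).eq_of repP fun i => key2 _ (hdP0 i)
  have hPmPPm : Pm * P * Pm = 1 := ((repPm.mul repP).mul repPm).eq_one fun i => key3 _ (hdP0 i)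
  set Z : Matrix (Fin n) (Fin n) ℂ := Pm * Q * Pm with hZdef
  have hZher : Z.IsHermitian := isHermitian_conj_conj hQher repPm.isHermitian
  obtain ⟨hZlb, hZub⟩ := sandwich P Q Pm repPm.isHermitian hPmPPm hPub hPlb hQub hQlb
    hhua hh'la hhpos.le hh'pos.le
  have repZ := hZher.isURep
  have hdZl := repZ.le_of_posSemidef_sub hZlb
  have hdZu := repZ.le_of_posSemidef_sub' hZub
  have hM₁ : (μ • Z + (ν + K) • (1 : Matrix (Fin n) (Fin n) ℂ) - cfc f Z).PosSemidef := by
    refine (((repZ.smul μ).add ((IsURep.one repZ.unit).smul (ν + K))).sub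
      (repZ.cfc f)).posSemidef ?_
    intro i
    have ht := tangent (hZher.eigenvalues i) (lt_of_lt_of_le hhpos (hdZl i)).le
    simp only [hfdef]
    simp only [mul_one, sub_nonneg]
    linarith
  have hT1 : (μ • Q + (ν + K) • P - mGeoMean α P Q).PosSemidef := by
    have hconj := posSemidef_conj_herm hM₁ repPh.isHermitian
    rw [conj_comb] at hconj
    have hPhZPh : Ph * Z * Ph = Q := by
      have e : Ph * Z * Ph = Ph * Pm * Q * (Pm * Ph) := by
        rw [hZdef]
        simp only [mul_assoc]
      rw [e, hPhPm, hPmPh, one_mul, mul_one]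
    rw [hPhZPh, hPhPh] at hconj
    have hGeq : mGeoMean α P Q = Ph * cfc f Z * Ph := rfl
    rwa [hGeq]
  -- Part II : the Kronecker side
  have repA := hA.1.isURep
  have repB := hB.1.isURep
  have hdAl := repA.le_of_posSemidef_sub hA₁
  have hdBl := repB.le_of_posSemidef_sub hB₁
  have hdA0 : ∀ i, 0 < hA.1.eigenvalues i := fun i => lt_of_lt_of_le hb₁ (hdAl i)
  have hdB0 : ∀ i, 0 < hB.1.eigenvalues i := fun i => lt_of_lt_of_le hb₂ (hdBl i)
  set Am : Matrix (Fin n) (Fin n) ℂ := mPow A (-(1/2)) with hAmdef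
  set Bm : Matrix (Fin n) (Fin n) ℂ := mPow B (-(1/2)) with hBmdef
  set Ah : Matrix (Fin n) (Fin n) ℂ := mPow A (1/2) with hAhdef
  set Bh : Matrix (Fin n) (Fin n) ℂ := mPow B (1/2) with hBhdef
  have repAm : IsURep Am (hA.1.eigenvectorUnitary : Matrix (Fin n) (Fin n) ℂ)
      (fun i => hA.1.eigenvalues i ^ (-((1:ℝ)/2))) := repA.cfc _
  have repBm : IsURep Bm (hB.1.eigenvectorUnitary : Matrix (Fin n) (Fin n) ℂ)
      (fun i => hB.1.eigenvalues i ^ (-((1:ℝ)/2))) := repB.cfc _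
  have repAh : IsURep Ah (hA.1.eigenvectorUnitary : Matrix (Fin n) (Fin n) ℂ)
      (fun i => hA.1.eigenvalues i ^ ((1:ℝ)/2)) := repA.cfc _
  have repBh : IsURep Bh (hB.1.eigenvectorUnitary : Matrix (Fin n) (Fin n) ℂ)
      (fun i => hB.1.eigenvalues i ^ ((1:ℝ)/2)) := repB.cfc _
  set AB : Matrix (Fin n × Fin n) (Fin n × Fin n) ℂ := A ⊗ₖ B with hABdef
  set CD : Matrix (Fin n × Fin n) (Fin n × Fin n) ℂ := C ⊗ₖ D with hCDdef
  have repAB : IsURep AB _ (fun q => hA.1.eigenvalues q.1 * hB.1.eigenvalues q.2) :=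
    repA.kron repB
  have hABub : ((a₁ * a₂) • (1 : Matrix (Fin n × Fin n) (Fin n × Fin n) ℂ) - AB).PosSemidef := by
    rw [hABdef, kron_ub_identity A B a₁ a₂]
    exact (posSemidef_kron hA₂ hB.posSemidef).add
      (posSemidef_real_smul (posSemidef_kron posSemidef_one_c hB₂) ha₁.le)
  have hABlb : (AB - (b₁ * b₂) • (1 : Matrix (Fin n × Fin n) (Fin n × Fin n) ℂ)).PosSemidef := by
    rw [hABdef, kron_lb_identity A B b₁ b₂]
    exact (posSemidef_kron hA₁ hB.posSemidef).add
      (posSemidef_real_smul (posSemidef_kron posSemidef_one_c hB₁) hb₁.le)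
  have hCDub : ((a₃ * a₄) • (1 : Matrix (Fin n × Fin n) (Fin n × Fin n) ℂ) - CD).PosSemidef := by
    rw [hCDdef, kron_ub_identity C D a₃ a₄]
    exact (posSemidef_kron hC₂ hD.posSemidef).add
      (posSemidef_real_smul (posSemidef_kron posSemidef_one_c hD₂) ha₃.le)
  have hCDlb : (CD - (b₃ * b₄) • (1 : Matrix (Fin n × Fin n) (Fin n × Fin n) ℂ)).PosSemidef := by
    rw [hCDdef, kron_lb_identity C D b₃ b₄]
    exact (posSemidef_kron hC₁ hD.posSemidef).add
      (posSemidef_real_smul (posSemidef_kron posSemidef_one_c hD₁) hb₃.le)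
  set ABm : Matrix (Fin n × Fin n) (Fin n × Fin n) ℂ := Am ⊗ₖ Bm with hABmdef
  set ABh : Matrix (Fin n × Fin n) (Fin n × Fin n) ℂ := Ah ⊗ₖ Bh with hABhdef
  have repABm : IsURep ABm _
      (fun q => hA.1.eigenvalues q.1 ^ (-((1:ℝ)/2)) * hB.1.eigenvalues q.2 ^ (-((1:ℝ)/2))) :=
    repAm.kron repBm
  have repABh : IsURep ABh _
      (fun q => hA.1.eigenvalues q.1 ^ ((1:ℝ)/2) * hB.1.eigenvalues q.2 ^ ((1:ℝ)/2)) :=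
    repAh.kron repBh
  have hABhm : ABh * ABm = 1 := (repABh.mul repABm).eq_one fun q => by
    rw [show hA.1.eigenvalues q.1 ^ ((1:ℝ)/2) * hB.1.eigenvalues q.2 ^ ((1:ℝ)/2) *
        (hA.1.eigenvalues q.1 ^ (-((1:ℝ)/2)) * hB.1.eigenvalues q.2 ^ (-((1:ℝ)/2)))
        = (hA.1.eigenvalues q.1 ^ ((1:ℝ)/2) * hA.1.eigenvalues q.1 ^ (-((1:ℝ)/2))) *
          (hB.1.eigenvalues q.2 ^ ((1:ℝ)/2) * hB.1.eigenvalues q.2 ^ (-((1:ℝ)/2))) from by ring,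
      key1 _ (hdA0 q.1), key1 _ (hdB0 q.2), one_mul]
  have hABmh : ABm * ABh = 1 := (repABm.mul repABh).eq_one fun q => by
    rw [show hA.1.eigenvalues q.1 ^ (-((1:ℝ)/2)) * hB.1.eigenvalues q.2 ^ (-((1:ℝ)/2)) *
        (hA.1.eigenvalues q.1 ^ ((1:ℝ)/2) * hB.1.eigenvalues q.2 ^ ((1:ℝ)/2))
        = (hA.1.eigenvalues q.1 ^ (-((1:ℝ)/2)) * hA.1.eigenvalues q.1 ^ ((1:ℝ)/2)) *
          (hB.1.eigenvalues q.2 ^ (-((1:ℝ)/2)) * hB.1.eigenvalues q.2 ^ ((1:ℝ)/2)) from by ring,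
      key1' _ (hdA0 q.1), key1' _ (hdB0 q.2), one_mul]
  have hABhh : ABh * ABh = AB := (repABh.mul repABh).eq_of repAB fun q => by
    rw [show hA.1.eigenvalues q.1 ^ ((1:ℝ)/2) * hB.1.eigenvalues q.2 ^ ((1:ℝ)/2) *
        (hA.1.eigenvalues q.1 ^ ((1:ℝ)/2) * hB.1.eigenvalues q.2 ^ ((1:ℝ)/2))
        = (hA.1.eigenvalues q.1 ^ ((1:ℝ)/2) * hA.1.eigenvalues q.1 ^ ((1:ℝ)/2)) *
          (hB.1.eigenvalues q.2 ^ ((1:ℝ)/2) * hB.1.eigenvalues q.2 ^ ((1:ℝ)/2)) from by ring,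
      key2 _ (hdA0 q.1), key2 _ (hdB0 q.2)]
  have hABmABABm : ABm * AB * ABm = 1 :=
    ((repABm.mul repAB).mul repABm).eq_one fun q => by
      rw [show hA.1.eigenvalues q.1 ^ (-((1:ℝ)/2)) * hB.1.eigenvalues q.2 ^ (-((1:ℝ)/2)) *
          (hA.1.eigenvalues q.1 * hB.1.eigenvalues q.2) *
          (hA.1.eigenvalues q.1 ^ (-((1:ℝ)/2)) * hB.1.eigenvalues q.2 ^ (-((1:ℝ)/2)))
          = (hA.1.eigenvalues q.1 ^ (-((1:ℝ)/2)) * hA.1.eigenvalues q.1 *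
              hA.1.eigenvalues q.1 ^ (-((1:ℝ)/2))) *
            (hB.1.eigenvalues q.2 ^ (-((1:ℝ)/2)) * hB.1.eigenvalues q.2 *
              hB.1.eigenvalues q.2 ^ (-((1:ℝ)/2))) from by ring,
        key3 _ (hdA0 q.1), key3 _ (hdB0 q.2), one_mul]
  set Z₁ : Matrix (Fin n) (Fin n) ℂ := Am * C * Am with hZ₁def
  set Z₂ : Matrix (Fin n) (Fin n) ℂ := Bm * D * Bm with hZ₂def
  set Zk : Matrix (Fin n × Fin n) (Fin n × Fin n) ℂ := ABm * CD * ABm with hZkdef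
  have hZkeq : Zk = Z₁ ⊗ₖ Z₂ := by
    rw [hZkdef, hABmdef, hCDdef, hZ₁def, hZ₂def, ← Matrix.mul_kronecker_mul,
      ← Matrix.mul_kronecker_mul]
  have hZ₁her : Z₁.IsHermitian := isHermitian_conj_conj hC.1 repAm.isHermitian
  have hZ₂her : Z₂.IsHermitian := isHermitian_conj_conj hD.1 repBm.isHermitian
  have hZ₁psd : Z₁.PosSemidef := posSemidef_conj_herm hC.posSemidef repAm.isHermitian
  have hZ₂psd : Z₂.PosSemidef := posSemidef_conj_herm hD.posSemidef repBm.isHermitian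
  have repZ₁ := hZ₁her.isURep
  have repZ₂ := hZ₂her.isURep
  have repZk : IsURep Zk
      ((hZ₁her.eigenvectorUnitary : Matrix (Fin n) (Fin n) ℂ) ⊗ₖ
        (hZ₂her.eigenvectorUnitary : Matrix (Fin n) (Fin n) ℂ))
      (fun q => hZ₁her.eigenvalues q.1 * hZ₂her.eigenvalues q.2) := by
    rw [hZkeq]
    exact repZ₁.kron repZ₂
  obtain ⟨hZklb, hZkub⟩ := sandwich AB CD ABm repABm.isHermitian hABmABABm hABub hABlb
    hCDub hCDlb hhua hh'la hhpos.le hh'pos.le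
  have hel := repZk.le_of_posSemidef_sub hZklb
  have heu := repZk.le_of_posSemidef_sub' hZkub
  have hM₂ : (cfc f Zk -
      (μ • Zk + ν • (1 : Matrix (Fin n × Fin n) (Fin n × Fin n) ℂ))).PosSemidef := by
    refine ((repZk.cfc f).sub
      ((repZk.smul μ).add ((IsURep.one repZk.unit).smul ν))).posSemidef ?_
    intro q
    have hc := chord _ (hel q) (heu q)
    simp only [hfdef, mul_one, sub_nonneg]
    linarith
  have hcfcZk : cfc f Zk = cfc f Z₁ ⊗ₖ cfc f Z₂ :=
    (repZk.cfc f).eq_of ((repZ₁.cfc f).kron (repZ₂.cfc f)) fun q => by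
      simp only [hfdef]
      exact Real.mul_rpow (hZ₁psd.eigenvalues_nonneg q.1) (hZ₂psd.eigenvalues_nonneg q.2)
  have hT2kron : ((mGeoMean α A C ⊗ₖ mGeoMean α B D) - (μ • CD + ν • AB)).PosSemidef := by
    have hconj := posSemidef_conj_herm hM₂ repABh.isHermitian
    rw [conj_comb'] at hconj
    have h1 : ABh * Zk * ABh = CD := by
      have e : ABh * Zk * ABh = ABh * ABm * CD * (ABm * ABh) := by
        rw [hZkdef]
        simp only [mul_assoc]
      rw [e, hABhm, hABmh, one_mul, mul_one]
    have h3 : ABh * cfc f Zk * ABh = mGeoMean α A C ⊗ₖ mGeoMean α B D := by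
      rw [hcfcZk, hABhdef, ← Matrix.mul_kronecker_mul, ← Matrix.mul_kronecker_mul]
      rfl
    rw [h1, hABhh, h3] at hconj
    exact hconj
  have hT2 : ((mGeoMean α A C).hadamard (mGeoMean α B D) - (μ • Q + ν • P)).PosSemidef := by
    have hsub := hT2kron.submatrix (fun i : Fin n => (i, i))
    have e : ((mGeoMean α A C ⊗ₖ mGeoMean α B D) - (μ • CD + ν • AB)).submatrix
        (fun i : Fin n => (i, i)) (fun i : Fin n => (i, i))
        = (mGeoMean α A C).hadamard (mGeoMean α B D) - (μ • Q + ν • P) := by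
      ext i j
      simp [Matrix.submatrix_apply, Matrix.sub_apply, Matrix.add_apply, Matrix.smul_apply,
        Matrix.hadamard_apply, Matrix.kroneckerMap_apply, hCDdef, hABdef, hPdef, hQdef,
        Complex.real_smul]
    rwa [e] at hsub
  have hT3 : (K • ((a₁ * a₂) • (1 : Matrix (Fin n) (Fin n) ℂ) - P)).PosSemidef :=
    posSemidef_real_smul hPub hK0
  have hfinal : (K * (a₁ * a₂)) • (1 : Matrix (Fin n) (Fin n) ℂ)
      - (mGeoMean α P Q - (mGeoMean α A C).hadamard (mGeoMean α B D))
      = (μ • Q + (ν + K) • P - mGeoMean α P Q)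
        + ((mGeoMean α A C).hadamard (mGeoMean α B D) - (μ • Q + ν • P))
        + K • ((a₁ * a₂) • (1 : Matrix (Fin n) (Fin n) ℂ) - P) := by
    module
  rw [hfinal]
  exact (hT1.add hT2).add hT3
end
end
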